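/- Let K be a symmetric, homogeneous, twice continuously differentiable bivariate mean on ℝ², and ε, ε* fixed reals with ε + ε* = 1. Then lim_{x→∞} ( K(x+ε, x+ε*) − (x+1/2) )·ln(x+1/2) = 0, and consequently lim_{x→∞} [ ln Γ(x+1) − (1/2)ln(2π) − K(x+ε, x+ε*)·ln(x+1/2) + (x+1/2) ] = 0. -/

import Mathlib

set_option maxHeartbeats 1000000

open Filter Real Set


noncomputable def eSt (n : ℕ) : ℝ :=
  Real.log (Nat.factorial n) - ((n:ℝ) * Real.log n - n + (1/2) * Real.log n + (1/2) * Real.log (2*π))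

lemma aux_log_bound {u : ℝ} (hu : 0 ≤ u) :
    u ≤ (1+u) * Real.log (1+u) ∧ (1+u) * Real.log (1+u) ≤ u + u^2 := by
  have h1u : (0:ℝ) < 1 + u := by linarith
  have h1 : Real.log (1+u) ≤ u := by
    have := Real.log_le_sub_one_of_pos h1u; linarith
  have h2 : u / (1+u) ≤ Real.log (1+u) := by
    have h := Real.log_le_sub_one_of_pos (show (0:ℝ) < (1+u)⁻¹ by positivity)
    rw [Real.log_inv] at h
    have e : (1+u)⁻¹ - 1 = -(u/(1+u)) := by field_simp; ring
    linarith [e ▸ h]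
  constructor
  · have := (div_le_iff₀ h1u).mp h2
    nlinarith
  · nlinarith

lemma stirling_bound (x : ℝ) (hx : 1 ≤ x) :
    |Real.log (Real.Gamma (x+1)) - (x+1/2)*Real.log (x+1/2) + (x+1/2) - (1/2)*Real.log (2*π)|
      ≤ |eSt ⌊x⌋₊| + 3 / (⌊x⌋₊ : ℝ) := by
  set n := ⌊x⌋₊ with hn
  have hn1 : 1 ≤ n := Nat.le_floor (by exact_mod_cast hx)
  have hnx : (n:ℝ) ≤ x := Nat.floor_le (by linarith)
  have hxn : x < n + 1 := Nat.lt_floor_add_one x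
  have hn0 : (0:ℝ) < n := by exact_mod_cast hn1
  have hn0' : (1:ℝ) ≤ n := by exact_mod_cast hn1
  set t := x - n with ht
  have ht0 : 0 ≤ t := by simp only [ht]; linarith
  have ht1 : t < 1 := by simp only [ht]; linarith
  have hconv := Real.convexOn_log_Gamma
  have g1 : Real.Gamma ((n:ℝ)+1) = Nat.factorial n := Real.Gamma_nat_eq_factorial n
  -- upper bound from convexity
  have hupper : Real.log (Real.Gamma (x+1)) ≤
      Real.log (Nat.factorial n) + t * Real.log ((n:ℝ)+1) := by
    have g2 : Real.Gamma ((n:ℝ)+2) = Nat.factorial (n+1) := by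
      have h := Real.Gamma_nat_eq_factorial (n+1)
      push_cast at h
      rw [show ((n:ℝ)+2) = (n:ℝ)+1+1 by ring]; exact h
    have lfac : Real.log (Nat.factorial (n+1)) =
        Real.log ((n:ℝ)+1) + Real.log (Nat.factorial n) := by
      rw [Nat.factorial_succ]
      push_cast
      rw [Real.log_mul (by positivity) (by positivity)]
    have hc := hconv.2 (show ((n:ℝ)+1) ∈ Ioi (0:ℝ) by simp; positivity)
      (show ((n:ℝ)+2) ∈ Ioi (0:ℝ) by simp; positivity)
      (sub_nonneg.mpr ht1.le) ht0 (by ring)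
    simp only [smul_eq_mul, Function.comp] at hc
    have hpt : (1-t)*((n:ℝ)+1) + t*((n:ℝ)+2) = x + 1 := by simp only [ht]; ring
    rw [hpt, g1, g2, lfac] at hc
    nlinarith [hc]
  -- lower bound from convexity
  have hlower : Real.log (Nat.factorial n) + t * Real.log n ≤
      Real.log (Real.Gamma (x+1)) := by
    rcases eq_or_lt_of_le ht0 with h0 | h0
    · have hxn' : x = n := by simp only [ht] at h0; linarith
      rw [← h0, hxn', g1.symm]
      simp
    · have grec : Real.Gamma ((n:ℝ)+1) = n * Real.Gamma n := Real.Gamma_add_one hn0.ne'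
      have hΓpos : 0 < Real.Gamma (n:ℝ) := Real.Gamma_pos_of_pos hn0
      have hlog : Real.log (Real.Gamma ((n:ℝ)+1)) = Real.log n + Real.log (Real.Gamma n) := by
        rw [grec, Real.log_mul hn0.ne' hΓpos.ne']
      have hs := hconv.slope_mono_adjacent (show (n:ℝ) ∈ Ioi (0:ℝ) from hn0)
        (show x+1 ∈ Ioi (0:ℝ) by simp; linarith)
        (show (n:ℝ) < (n:ℝ)+1 by linarith)
        (show (n:ℝ)+1 < x+1 by simp only [ht] at h0; linarith)
      simp only [Function.comp] at hs
      have hd1 : ((n:ℝ)+1) - n = 1 := by ring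
      have hd2 : (x+1) - ((n:ℝ)+1) = t := by simp only [ht]; ring
      rw [hd1, hd2, div_one, hlog] at hs
      have h' : Real.log n ≤
          (Real.log (Real.Gamma (x+1)) - (Real.log n + Real.log (Real.Gamma n))) / t := by
        linarith
      have h'' := (le_div_iff₀ h0).mp h'
      rw [← hlog, g1] at h''
      linarith
  -- bracket estimates
  set u := (t + 1/2) / n with hu
  have hu0 : 0 ≤ u := by positivity
  have hsu : x + 1/2 = (n:ℝ) * (1+u) := by
    simp only [hu, ht]; field_simp; ring
  have h1u : (0:ℝ) < 1 + u := by linarith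
  have hlogs : Real.log (x+1/2) = Real.log n + Real.log (1+u) := by
    rw [hsu, Real.log_mul hn0.ne' h1u.ne']
  obtain ⟨hb1, hb2⟩ := aux_log_bound hu0
  have hnu : (n:ℝ) * u = t + 1/2 := by simp only [hu]; field_simp
  have hnu2 : (n:ℝ) * u^2 = (t+1/2)^2 / n := by simp only [hu]; field_simp
  have hnu2' : (n:ℝ) * u^2 ≤ 3 / n := by
    rw [hnu2]
    have h9 : (t+1/2)^2 ≤ 3 := by nlinarith
    gcongr
  have hsB1 : t + 1/2 ≤ (x+1/2) * Real.log (1+u) := by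
    rw [hsu]
    calc t + 1/2 = (n:ℝ) * u := hnu.symm
    _ ≤ (n:ℝ) * ((1+u) * Real.log (1+u)) := by
        exact mul_le_mul_of_nonneg_left hb1 hn0.le
    _ = (n:ℝ) * (1+u) * Real.log (1+u) := by ring
  have hsB2 : (x+1/2) * Real.log (1+u) ≤ t + 1/2 + 3 / n := by
    rw [hsu]
    calc (n:ℝ) * (1+u) * Real.log (1+u) = (n:ℝ) * ((1+u) * Real.log (1+u)) := by ring
    _ ≤ (n:ℝ) * (u + u^2) := mul_le_mul_of_nonneg_left hb2 hn0.le
    _ = (n:ℝ) * u + (n:ℝ) * u^2 := by ring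
    _ ≤ t + 1/2 + 3/n := by rw [hnu]; linarith [hnu2']
  have hCA0 : 0 ≤ Real.log ((n:ℝ)+1) - Real.log n :=
    sub_nonneg.mpr (Real.log_le_log hn0 (by linarith))
  have hCA1 : Real.log ((n:ℝ)+1) - Real.log n ≤ 1 / n := by
    have hq : (0:ℝ) < ((n:ℝ)+1)/n := by positivity
    have h := Real.log_le_sub_one_of_pos hq
    rw [Real.log_div (by positivity) hn0.ne'] at h
    have e : ((n:ℝ)+1)/n - 1 = 1/n := by field_simp; ring
    linarith [e ▸ h]
  -- final assembly
  have hE : eSt n = Real.log (Nat.factorial n) -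
      ((n:ℝ) * Real.log n - n + (1/2) * Real.log n + (1/2) * Real.log (2*π)) := rfl
  have hsA : (x+1/2) * Real.log (x+1/2) = (n:ℝ) * Real.log n + t * Real.log n
      + (1/2) * Real.log n + (x+1/2) * Real.log (1+u) := by
    rw [hlogs]; simp only [ht]; ring
  have htCA : t * Real.log ((n:ℝ)+1) - t * Real.log n ≤
      Real.log ((n:ℝ)+1) - Real.log n := by
    nlinarith [mul_nonneg (by linarith : (0:ℝ) ≤ 1 - t) hCA0]
  have htCA0 : 0 ≤ t * Real.log ((n:ℝ)+1) - t * Real.log n :=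
    mul_nonneg ht0 hCA0 |>.trans_eq (by ring)
  have hxnt : x = (n:ℝ) + t := by simp only [ht]; ring
  have hn3 : 1/(n:ℝ) ≤ 3/n := by gcongr <;> norm_num
  clear_value n t u
  rw [abs_le]
  constructor
  · linarith [neg_abs_le (eSt n), hsB2, hlower, hsA, hxnt, hE]
  · linarith [le_abs_self (eSt n), hsB1, hupper, hsA, htCA, hCA1, hxnt, hE, hn3]


lemma eSt_tendsto : Tendsto eSt atTop (nhds 0) := by
  have hlim : Tendsto (fun n : ℕ => Real.log (Stirling.stirlingSeq n) - (1/2) * Real.log π)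
      atTop (nhds 0) := by
    have h1 : Tendsto (fun n : ℕ => Real.log (Stirling.stirlingSeq n)) atTop
        (nhds (Real.log (Real.sqrt π))) :=
      ((Real.continuousAt_log (by positivity)).tendsto).comp Stirling.tendsto_stirlingSeq_sqrt_pi
    rw [Real.log_sqrt pi_pos.le] at h1
    have h2 := h1.sub (tendsto_const_nhds (x := Real.log π / 2) (f := atTop))
    simpa [one_div, div_eq_inv_mul, mul_comm] using h2
  refine hlim.congr' ?_
  filter_upwards [eventually_ge_atTop 1] with n hn
  have hn0 : (0:ℝ) < n := by exact_mod_cast hn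
  have hf := Stirling.log_stirlingSeq_formula n
  have e1 : Real.log (2 * (n:ℝ)) = Real.log 2 + Real.log n := Real.log_mul two_ne_zero hn0.ne'
  have e2 : Real.log ((n:ℝ) / Real.exp 1) = Real.log n - 1 := by
    rw [Real.log_div hn0.ne' (Real.exp_ne_zero 1), Real.log_exp]
  have e3 : Real.log (2*π) = Real.log 2 + Real.log π := Real.log_mul two_ne_zero pi_pos.ne'
  rw [e1, e2] at hf
  simp only [eSt, e3]
  nlinarith [hf]

lemma real_stirling :
    Filter.Tendsto (fun x : ℝ => Real.log (Real.Gamma (x+1)) - (x+1/2)*Real.log (x+1/2) + (x+1/2)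
      - (1/2)*Real.log (2*π)) Filter.atTop (nhds 0) := by
  have h3 : Tendsto (fun n : ℕ => |eSt n| + 3/(n:ℝ)) atTop (nhds 0) := by
    have h1 : Tendsto (fun n : ℕ => |eSt n|) atTop (nhds 0) := by
      simpa using eSt_tendsto.abs
    have h2 : Tendsto (fun n : ℕ => 3/(n:ℝ)) atTop (nhds 0) :=
      tendsto_const_nhds.div_atTop tendsto_natCast_atTop_atTop
    simpa using h1.add h2
  have h4 : Tendsto (fun x : ℝ => |eSt ⌊x⌋₊| + 3/(⌊x⌋₊:ℝ)) atTop (nhds 0) :=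
    h3.comp tendsto_nat_floor_atTop
  refine squeeze_zero_norm' ?_ h4
  filter_upwards [eventually_ge_atTop (1:ℝ)] with x hx
  simpa [Real.norm_eq_abs] using stirling_bound x hx


lemma part_one (K : ℝ → ℝ → ℝ)
    (hmean : ∀ a b : ℝ, min a b ≤ K a b ∧ K a b ≤ max a b)
    (hsymm : ∀ a b : ℝ, K a b = K b a)
    (hhom : ∀ t > (0:ℝ), ∀ a b : ℝ, K (t * a) (t * b) = t * K a b)
    (hdiff : ContDiff ℝ 2 (fun p : ℝ × ℝ => K p.1 p.2))
    (ε εs : ℝ) (hε : ε + εs = 1) :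
    Tendsto (fun x : ℝ => (K (x + ε) (x + εs) - (x + 1 / 2)) * Real.log (x + 1 / 2))
      atTop (nhds 0) := by
  set φ : ℝ → ℝ := fun h => K (1+h) (1-h) with hφdef
  have hφ : ContDiff ℝ 2 φ := by
    have hl : ContDiff ℝ 2 (fun h : ℝ => ((1+h, 1-h) : ℝ × ℝ)) :=
      ContDiff.prodMk (contDiff_const.add contDiff_id) (contDiff_const.sub contDiff_id)
    exact hdiff.comp hl
  have heven : ∀ h : ℝ, φ (-h) = φ h := by
    intro h
    simp only [hφdef]
    rw [show (1:ℝ) + -h = 1 - h by ring, show (1:ℝ) - -h = 1 + h by ring]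
    exact hsymm _ _
  have hφ0 : φ 0 = 1 := by
    have h := hmean 1 1
    simp only [min_self, max_self] at h
    simp only [hφdef]
    norm_num
    linarith [h.1, h.2]
  obtain ⟨hd1, -, hφ'⟩ := contDiff_succ_iff_deriv.mp (show ContDiff ℝ (1+1) φ by
    norm_num [hφ])
  obtain ⟨hd2, -, hφ''⟩ := contDiff_succ_iff_deriv.mp (show ContDiff ℝ (0+1) (deriv φ) by
    norm_num [hφ'])
  have hcont2 : Continuous (deriv (deriv φ)) := contDiff_zero.mp hφ''
  have hderiv0 : deriv φ 0 = 0 := by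
    have h1 : deriv (fun x => φ (-x)) 0 = - deriv φ (-0) := deriv_comp_neg φ 0
    rw [show (fun x => φ (-x)) = φ from funext heven] at h1
    simp at h1
    linarith
  -- bound on second derivative
  obtain ⟨M, hM⟩ := (isCompact_Icc (a := (-1:ℝ)) (b := 1)).exists_bound_of_continuousOn
    hcont2.continuousOn
  set M' := max M 0 with hM'
  have hM'0 : 0 ≤ M' := le_max_right _ _
  have hMb : ∀ y ∈ Icc (-1:ℝ) 1, |deriv (deriv φ) y| ≤ M' := fun y hy =>
    (hM y hy).trans (le_max_left _ _)
  -- key bound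
  have key : ∀ h : ℝ, |h| ≤ 1 → |φ h - 1| ≤ M' * h^2 := by
    have pos_case : ∀ h : ℝ, 0 < h → h ≤ 1 → |φ h - 1| ≤ M' * h^2 := by
      intro h h0 h1
      obtain ⟨c, hc, hceq⟩ := exists_hasDerivAt_eq_slope φ (deriv φ) h0
        (hd1.continuous.continuousOn)
        (fun y _ => (hd1 y).hasDerivAt)
      obtain ⟨d, hd, hdeq⟩ := exists_hasDerivAt_eq_slope (deriv φ) (deriv (deriv φ)) hc.1
        (hd2.continuous.continuousOn)
        (fun y _ => (hd2 y).hasDerivAt)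
      rw [hφ0, sub_zero] at hceq
      rw [hderiv0, sub_zero, sub_zero] at hdeq
      have e1 : φ h - 1 = deriv φ c * h := by
        rw [(div_eq_iff (ne_of_gt h0)).mp hceq.symm]
      have e2 : deriv φ c = deriv (deriv φ) d * c := by
        rw [hdeq]; exact (div_mul_cancel₀ _ (ne_of_gt hc.1)).symm
      have hdmem : d ∈ Icc (-1:ℝ) 1 := ⟨by linarith [hd.1], by linarith [hd.2, hc.2]⟩
      have hMd := hMb d hdmem
      rw [e1, e2]
      rw [abs_mul, abs_mul]
      have hc1 : |c| ≤ h := by rw [abs_of_pos hc.1]; linarith [hc.2]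
      have hh : |h| = h := abs_of_pos h0
      calc |deriv (deriv φ) d| * |c| * |h| ≤ M' * h * h := by
            apply mul_le_mul ?_ hh.le (abs_nonneg _) (by positivity)
            exact mul_le_mul hMd hc1 (abs_nonneg _) hM'0
        _ = M' * h^2 := by ring
    intro h habs
    rcases lt_trichotomy h 0 with h0 | h0 | h0
    · have := pos_case (-h) (by linarith) (by rw [abs_of_neg h0] at habs; linarith)
      rw [heven] at this
      simpa [neg_sq] using this
    · simp [h0, hφ0]
    · exact pos_case h h0 (by rwa [abs_of_pos h0] at habs)
  -- main
  set δ := ε - 1/2 with hδ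
  have hεs : εs = 1 - ε := by linarith
  have hbound : ∀ x : ℝ, max 1 (2*|δ|) ≤ x →
      |(K (x + ε) (x + εs) - (x + 1/2)) * Real.log (x + 1/2)|
        ≤ M' * δ^2 * (Real.log (x+1/2) / (x+1/2)) := by
    intro x hx
    have hx1 : 1 ≤ x := le_trans (le_max_left _ _) hx
    have hxδ : 2*|δ| ≤ x := le_trans (le_max_right _ _) hx
    have hs0 : (0:ℝ) < x + 1/2 := by linarith
    have hs1 : (1:ℝ) ≤ x + 1/2 := by linarith
    have hlog0 : 0 ≤ Real.log (x+1/2) := Real.log_nonneg hs1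
    have hKeq : K (x + ε) (x + εs) = (x+1/2) * φ (δ/(x+1/2)) := by
      have h := hhom (x+1/2) hs0 (1 + δ/(x+1/2)) (1 - δ/(x+1/2))
      have e1 : (x+1/2) * (1 + δ/(x+1/2)) = x + ε := by
        field_simp; simp only [hδ]; ring
      have e2 : (x+1/2) * (1 - δ/(x+1/2)) = x + εs := by
        field_simp; simp only [hδ]; rw [hεs]; ring
      rw [e1, e2] at h
      exact h
    have hratio : |δ/(x+1/2)| ≤ 1 := by
      rw [abs_div, abs_of_pos hs0, div_le_one hs0]
      linarith [abs_nonneg δ]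
    have hkey := key _ hratio
    rw [abs_mul, abs_of_nonneg hlog0]
    have h1 : |K (x+ε) (x+εs) - (x+1/2)| ≤ M' * δ^2 / (x+1/2) := by
      rw [hKeq, show (x+1/2) * φ (δ/(x+1/2)) - (x+1/2)
          = (x+1/2) * (φ (δ/(x+1/2)) - 1) from by ring, abs_mul, abs_of_pos hs0]
      calc (x+1/2) * |φ (δ/(x+1/2)) - 1| ≤ (x+1/2) * (M' * (δ/(x+1/2))^2) :=
            mul_le_mul_of_nonneg_left hkey hs0.le
        _ = M' * δ^2 / (x+1/2) := by field_simp
    calc |K (x+ε) (x+εs) - (x+1/2)| * Real.log (x+1/2)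
        ≤ (M' * δ^2 / (x+1/2)) * Real.log (x+1/2) :=
          mul_le_mul_of_nonneg_right h1 hlog0
      _ = M' * δ^2 * (Real.log (x+1/2) / (x+1/2)) := by ring
  have hlim : Tendsto (fun x : ℝ => M' * δ^2 * (Real.log (x+1/2) / (x+1/2)))
      atTop (nhds 0) := by
    have h1 : Tendsto (fun y : ℝ => Real.log y / y) atTop (nhds 0) := by
      simpa using Real.isLittleO_log_id_atTop.tendsto_div_nhds_zero
    have h2 : Tendsto (fun x : ℝ => x + 1/2) atTop atTop :=
      tendsto_atTop_add_const_right atTop (1/2) tendsto_id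
    have h3 := (h1.comp h2).const_mul (M' * δ^2)
    simpa using h3
  refine squeeze_zero_norm' ?_ hlim
  filter_upwards [eventually_ge_atTop (max 1 (2*|δ|))] with x hx
  calc ‖(K (x + ε) (x + εs) - (x + 1/2)) * Real.log (x + 1/2)‖
      = |(K (x + ε) (x + εs) - (x + 1/2)) * Real.log (x + 1/2)| := Real.norm_eq_abs _
    _ ≤ M' * δ^2 * (Real.log (x+1/2) / (x+1/2)) := hbound x hx


theorem gamma_asymptotic_K (K : ℝ → ℝ → ℝ)
    (hmean : ∀ a b : ℝ, min a b ≤ K a b ∧ K a b ≤ max a b)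
    (hsymm : ∀ a b : ℝ, K a b = K b a)
    (hhom : ∀ t > (0:ℝ), ∀ a b : ℝ, K (t * a) (t * b) = t * K a b)
    (hdiff : ContDiff ℝ 2 (fun p : ℝ × ℝ => K p.1 p.2))
    (ε εs : ℝ) (hε : ε + εs = 1) :
    Tendsto (fun x : ℝ => (K (x + ε) (x + εs) - (x + 1 / 2)) * Real.log (x + 1 / 2))
      atTop (nhds 0) ∧
    Tendsto (fun x : ℝ => Real.log (Real.Gamma (x + 1)) - (1 / 2) * Real.log (2 * π)
        - K (x + ε) (x + εs) * Real.log (x + 1 / 2) + (x + 1 / 2))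
      atTop (nhds 0) := by
  have h1 := part_one K hmean hsymm hhom hdiff ε εs hε
  refine ⟨h1, ?_⟩
  have h2 := real_stirling.sub h1
  have heq : (fun x : ℝ => Real.log (Real.Gamma (x+1)) - (x+1/2)*Real.log (x+1/2) + (x+1/2)
      - (1/2)*Real.log (2*π) - (K (x + ε) (x + εs) - (x + 1/2)) * Real.log (x + 1/2))
      = (fun x : ℝ => Real.log (Real.Gamma (x + 1)) - (1 / 2) * Real.log (2 * π)
        - K (x + ε) (x + εs) * Real.log (x + 1 / 2) + (x + 1 / 2)) := by
    funext x; ring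
  rw [heq] at h2
  simpa using h2
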